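/- Let S be a Hausdorff countably compact topological semigroup. Then the inversion map inv : H(S) → H(S) is sequentially continuous: for every sequence (x_n) in H(S) converging to x ∈ H(S), the sequence (x_n⁻¹) converges to x⁻¹. -/

import Mathlib

open Filter Topology

variable {S : Type*}

/-- `spow x n` is `x ^ n` for `n ≥ 1` in a semigroup (with junk value `x` at `0`). -/
def spow {S : Type*} [Mul S] (x : S) : ℕ → S
  | 0 => x
  | 1 => x
  | n + 2 => spow x (n + 1) * x

/-- An element of a topological semigroup is topologically periodic if every open
neighbourhood of `x` contains `x ^ n` for some `n ≥ 2`. -/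
def TopPeriodic {S : Type*} [Mul S] [TopologicalSpace S] (x : S) : Prop :=
  ∀ U : Set S, IsOpen U → x ∈ U → ∃ n : ℕ, 2 ≤ n ∧ spow x n ∈ U

/-- The Clifford part `H(S)` of a semigroup: the union of all maximal subgroups. -/
def HSet (S : Type*) [Mul S] : Set S :=
  {x | ∃ y, x * y = y * x ∧ x * y * x = x ∧ y * x * y = y}

/-- The maximal subgroup `H(e)` of a semigroup with identity the idempotent `e`. -/
def Hgrp (S : Type*) [Mul S] (e : S) : Set S :=
  {x | ∃ y, x * y = e ∧ y * x = e ∧ x * e = x ∧ e * x = x ∧ y * e = y ∧ e * y = y}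

/-- `inv` is the inversion map on the Clifford part `H(S)`: it sends each element of a
maximal subgroup to its (unique) commuting inverse. -/
def IsInvMap (S : Type*) [Mul S] (inv : S → S) : Prop :=
  ∀ x ∈ HSet S, x * inv x = inv x * x ∧ x * inv x * x = x ∧ inv x * x * inv x = inv x

/-- A topological space is countably compact if every countable open cover admits a
finite subcover. -/
def CountablyCompactSpace' (X : Type*) [TopologicalSpace X] : Prop :=
  ∀ U : ℕ → Set X, (∀ n, IsOpen (U n)) → (⋃ n, U n) = Set.univ →
    ∃ F : Finset ℕ, (⋃ n ∈ F, U n) = Set.univ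

/-- A subset of a topological space is countably compact (as a subspace) if every
countable cover by open sets of the ambient space admits a finite subcover. -/
def CountablyCompactIn {X : Type*} [TopologicalSpace X] (A : Set X) : Prop :=
  ∀ U : ℕ → Set X, (∀ n, IsOpen (U n)) → A ⊆ ⋃ n, U n →
    ∃ F : Finset ℕ, A ⊆ ⋃ n ∈ F, U n

/-- A topological space is pseudocompact if every continuous real-valued function on it
is bounded. -/
def Pseudocompact (X : Type*) [TopologicalSpace X] : Prop :=
  ∀ f : X → ℝ, Continuous f → ∃ M : ℝ, ∀ x, |f x| ≤ M


private lemma invUnique [Semigroup S] {x y z : S}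
    (h1 : x * y = y * x) (h2 : x * y * x = x) (h3 : y * x * y = y)
    (h4 : x * z = z * x) (_h5 : x * z * x = x) (h6 : z * x * z = z) : y = z := by
  have hef : x * y = (x * z) * (x * y) := by
    conv_lhs => rw [← _h5]
    simp [mul_assoc]
  have hfe : x * z = (x * z) * (x * y) := by
    calc x * z = z * x := h4
    _ = z * (x * y * x) := by rw [h2]
    _ = (z * x) * (y * x) := by simp [mul_assoc]
    _ = (x * z) * (x * y) := by rw [← h4, ← h1]
  have hefeq : x * y = x * z := by rw [hef, ← hfe]
  have hy : (x * y) * y = y := by rw [h1]; exact h3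
  calc y = (x * y) * y := hy.symm
  _ = (x * z) * y := by rw [hefeq]
  _ = (z * x) * y := by rw [h4]
  _ = z * (x * y) := by rw [mul_assoc]
  _ = z * (x * z) := by rw [hefeq]
  _ = (z * x) * z := by rw [mul_assoc]
  _ = z := h6

private lemma existsCluster [TopologicalSpace S]
    (hcc : CountablyCompactSpace' S) (v : ℕ → S) :
    ∃ z : S, (𝓝 z ⊓ map v atTop).NeBot := by
  have hC : ∃ z, ∀ N, z ∈ closure (v '' Set.Ici N) := by
    by_contra h
    push_neg at h
    have hcov : (⋃ n, (closure (v '' Set.Ici n))ᶜ) = Set.univ := by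
      ext w
      simp only [Set.mem_iUnion, Set.mem_compl_iff, Set.mem_univ, iff_true]
      exact h w
    obtain ⟨F, hF⟩ := hcc _ (fun n => isClosed_closure.isOpen_compl) hcov
    have hvM : v (F.sup id) ∈ ⋃ n ∈ F, (closure (v '' Set.Ici n))ᶜ := by
      rw [hF]; exact Set.mem_univ _
    simp only [Set.mem_iUnion, Set.mem_compl_iff] at hvM
    obtain ⟨n, hnF, hn⟩ := hvM
    exact hn (subset_closure ⟨F.sup id, Finset.le_sup (f := id) hnF, rfl⟩)
  obtain ⟨z, hz⟩ := hC
  refine ⟨z, ?_⟩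
  have : ClusterPt z (map v atTop) := by
    rw [clusterPt_iff_nonempty]
    intro U hU s hs
    obtain ⟨N, hN⟩ := mem_atTop_sets.mp (mem_map.mp hs)
    obtain ⟨w, hwU, hw⟩ := mem_closure_iff_nhds.mp (hz N) U hU
    obtain ⟨n, hn, rfl⟩ := hw
    exact ⟨v n, hwU, hN n hn⟩
  exact this

theorem stmt12 [Semigroup S] [TopologicalSpace S] [ContinuousMul S] [T2Space S]
    (hcc : CountablyCompactSpace' S) (inv : S → S) (hinv : IsInvMap S inv)
    (u : ℕ → S) (hu : ∀ n, u n ∈ HSet S) (x : S) (hx : x ∈ HSet S)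
    (hlim : Tendsto u atTop (𝓝 x)) :
    Tendsto (fun n => inv (u n)) atTop (𝓝 (inv x)) := by
  rw [tendsto_nhds]
  intro U hUo hUx
  by_contra hcon
  have hfreq : ∃ᶠ n in atTop, inv (u n) ∉ U := Filter.not_eventually.mp hcon
  obtain ⟨φ, hφ, hφU⟩ := Filter.extraction_of_frequently_atTop hfreq
  set v : ℕ → S := fun k => inv (u (φ k)) with hv
  obtain ⟨z, hzcl⟩ := existsCluster hcc v
  -- z ∉ U
  have hzU : z ∉ U := by
    have hle : map v atTop ≤ 𝓟 Uᶜ := by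
      rw [le_principal_iff, Filter.mem_map]
      exact Filter.univ_mem' hφU
    have : (𝓝 z ⊓ 𝓟 Uᶜ).NeBot := hzcl.mono (inf_le_inf_left _ hle)
    have hmem : z ∈ closure Uᶜ := mem_closure_iff_clusterPt.mpr this
    rwa [(hUo.isClosed_compl).closure_eq] at hmem
  -- the filter along which everything converges
  set G : Filter ℕ := atTop ⊓ comap v (𝓝 z) with hG
  have hGbot : G.NeBot := by
    rw [← Filter.map_neBot_iff v, Filter.push_pull, inf_comm]
    exact hzcl
  have hvz : Tendsto v G (𝓝 z) := tendsto_comap.mono_left inf_le_right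
  have hux : Tendsto (fun k => u (φ k)) G (𝓝 x) :=
    (hlim.comp hφ.tendsto_atTop).mono_left inf_le_left
  -- products
  have h1 : Tendsto (fun k => u (φ k) * v k) G (𝓝 (x * z)) := hux.mul hvz
  have h1' : Tendsto (fun k => u (φ k) * v k) G (𝓝 (z * x)) := by
    have := hvz.mul hux
    refine this.congr (fun k => ?_)
    exact ((hinv _ (hu (φ k))).1).symm
  have hcomm : x * z = z * x := tendsto_nhds_unique h1 h1'
  have h2 : Tendsto (fun k => u (φ k) * v k * u (φ k)) G (𝓝 (x * z * x)) := h1.mul hux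
  have h2' : Tendsto (fun k => u (φ k) * v k * u (φ k)) G (𝓝 x) := by
    refine hux.congr (fun k => ?_)
    exact ((hinv _ (hu (φ k))).2.1).symm
  have hxzx : x * z * x = x := tendsto_nhds_unique h2 h2'
  have h3 : Tendsto (fun k => v k * u (φ k) * v k) G (𝓝 (z * x * z)) := (hvz.mul hux).mul hvz
  have h3' : Tendsto (fun k => v k * u (φ k) * v k) G (𝓝 z) := by
    refine hvz.congr (fun k => ?_)
    exact ((hinv _ (hu (φ k))).2.2).symm
  have hzxz : z * x * z = z := tendsto_nhds_unique h3 h3'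
  obtain ⟨hc, hxi, hix⟩ := hinv x hx
  have : inv x = z := invUnique hc hxi hix hcomm hxzx hzxz
  exact hzU (this ▸ hUx)
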